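/- Let X be a Polish space, τ : ℝ^d × X → X a jointly continuous action of (ℝ^d, +), and μ an invariant and ergodic Borel probability measure on X. Let A ⊆ X be a Borel set and Z ⊆ ℝ^d a dense subset such that μ( τ(y,·)⁻¹(A) ∖ A ) = 0 for every y ∈ Z. Then μ(A) = 0 or μ(A) = 1. -/

import Mathlib

open MeasureTheory

/-- Let `X` be Polish, `τ` a jointly continuous `ℝ^d`-action and
`μ` an invariant ergodic Borel probability measure. If `A ⊆ X` is Borel and
`Z ⊆ ℝ^d` is dense with `μ(τ(y,·)⁻¹(A) ∖ A) = 0` for every `y ∈ Z`, then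
`μ(A) = 0` or `μ(A) = 1`. -/
theorem stmt_14 {X : Type*} [TopologicalSpace X] [PolishSpace X]
    [MeasurableSpace X] [BorelSpace X] (d : ℕ)
    (τ : (Fin d → ℝ) × X → X) (hτcont : Continuous τ)
    (hτzero : ∀ x, τ (0, x) = x)
    (hτadd : ∀ (y y' : Fin d → ℝ) (x : X), τ (y + y', x) = τ (y, τ (y', x)))
    (μ : Measure X) [IsProbabilityMeasure μ]
    (hinv : ∀ y : Fin d → ℝ, Measure.map (fun x => τ (y, x)) μ = μ)
    (herg : ∀ B : Set X, MeasurableSet B →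
      (∀ y : Fin d → ℝ, (fun x => τ (y, x)) ⁻¹' B = B) → μ B = 0 ∨ μ B = 1)
    (A : Set X) (hA : MeasurableSet A)
    (Z : Set (Fin d → ℝ)) (hZ : Dense Z)
    (hnull : ∀ y ∈ Z, μ (((fun x => τ (y, x)) ⁻¹' A) \ A) = 0) :
    μ A = 0 ∨ μ A = 1 := by
  classical
  haveI : NormalSpace X := by
    letI := TopologicalSpace.metrizableSpaceMetric X
    infer_instance
  have hTcont : ∀ y : Fin d → ℝ, Continuous fun x => τ (y, x) := fun y =>
    by fun_prop
  have hTmeas : ∀ y : Fin d → ℝ, Measurable fun x => τ (y, x) := fun y => (hTcont y).measurable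
  have hτmeas : Measurable τ := hτcont.measurable
  have hpre : ∀ (y : Fin d → ℝ) (S : Set X), MeasurableSet S →
      μ ((fun x => τ (y, x)) ⁻¹' S) = μ S := by
    intro y S hS
    conv_rhs => rw [← hinv y]
    rw [Measure.map_apply (hTmeas y) hS]
  have hAy : ∀ y : Fin d → ℝ, MeasurableSet ((fun x => τ (y, x)) ⁻¹' A) := fun y => (hTmeas y) hA
  -- symmetric difference is null on Z
  have hnull2 : ∀ y ∈ Z, μ (symmDiff ((fun x => τ (y, x)) ⁻¹' A) A) = 0 := by
    intro y hy
    have h1 : μ (((fun x => τ (y, x)) ⁻¹' A) \ A) = 0 := hnull y hy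
    have h2 : μ (A \ ((fun x => τ (y, x)) ⁻¹' A)) = 0 := by
      have h3 := measure_inter_add_diff (μ := μ) ((fun x => τ (y, x)) ⁻¹' A) hA
      rw [h1, add_zero] at h3
      have hinter : μ (A ∩ ((fun x => τ (y, x)) ⁻¹' A)) = μ A := by
        rw [Set.inter_comm]; rw [h3, hpre y A hA]
      have h4 := measure_inter_add_diff (μ := μ) A (hAy y)
      rw [hinter] at h4
      have hfin : μ A ≠ ⊤ := measure_ne_top μ A
      exact (ENNReal.add_right_inj hfin).mp (h4.trans (add_zero _).symm)
    rw [Set.symmDiff_def]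
    exact measure_union_null h1 h2
  -- indicator function of A
  set h : X → ℝ := A.indicator fun _ => (1:ℝ) with hh
  have hhm : Measurable h := measurable_const.indicator hA
  have hhb : ∀ x, |h x| ≤ 1 := by
    intro x; by_cases hx : x ∈ A <;> simp [hh, Set.indicator_apply, hx]
  have key : ∀ y : Fin d → ℝ,
      ∫ x, |h (τ (y, x)) - h x| ∂μ
        = (μ (symmDiff ((fun x => τ (y, x)) ⁻¹' A) A)).toReal := by
    intro y
    have hfun : (fun x => |h (τ (y, x)) - h x|)
        = (symmDiff ((fun x => τ (y, x)) ⁻¹' A) A).indicator fun _ => (1:ℝ) := by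
      funext x
      by_cases h1 : τ (y, x) ∈ A <;> by_cases h2 : x ∈ A <;>
        simp [hh, Set.indicator_apply, Set.mem_symmDiff, h1, h2]
    rw [hfun, integral_indicator_const (1:ℝ) ((hAy y).symmDiff hA)]
    simp [Measure.real]
  have hmap : ∀ (z : Fin d → ℝ) (g : X → ℝ), AEStronglyMeasurable g μ →
      ∫ x, g (τ (z, x)) ∂μ = ∫ x, g x ∂μ := by
    intro z g hg
    have h1 : ∫ x, g x ∂(Measure.map (fun x => τ (z, x)) μ) = ∫ x, g (τ (z, x)) ∂μ :=
      integral_map (hTmeas z).aemeasurable (by rw [hinv]; exact hg)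
    rw [hinv z] at h1
    exact h1.symm
  have hint : ∀ g : X → ℝ, AEStronglyMeasurable g μ → (∀ x, |g x| ≤ 2) → Integrable g μ := by
    intro g hg hb
    exact (integrable_const (2:ℝ)).mono' hg
      (Filter.Eventually.of_forall (by simpa using hb))
  -- Step 1: the symmetric difference is null for every y
  have step1 : ∀ y : Fin d → ℝ, μ (symmDiff ((fun x => τ (y, x)) ⁻¹' A) A) = 0 := by
    intro y
    have main : ∀ ε : ℝ, 0 < ε → (μ (symmDiff ((fun x => τ (y, x)) ⁻¹' A) A)).toReal ≤ ε := by
      intro ε hε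
      obtain ⟨F, hFA, hFclosed, hμF⟩ := hA.exists_isClosed_diff_lt (measure_ne_top μ A)
        (ε := ENNReal.ofReal (ε/6)) (by positivity)
      obtain ⟨U, hAU, hUopen, -, hμU⟩ := hA.exists_isOpen_diff_lt (measure_ne_top μ A)
        (ε := ENNReal.ofReal (ε/6)) (by positivity)
      have hμUF : (μ (U \ F)).toReal < ε/3 := by
        have hsub : U \ F ⊆ (U \ A) ∪ (A \ F) := by
          intro x hx
          by_cases hxA : x ∈ A
          · exact Or.inr ⟨hxA, hx.2⟩
          · exact Or.inl ⟨hx.1, hxA⟩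
        have h1 : μ (U \ F) < ENNReal.ofReal (ε/6) + ENNReal.ofReal (ε/6) :=
          lt_of_le_of_lt ((measure_mono hsub).trans (measure_union_le _ _))
            (ENNReal.add_lt_add hμU hμF)
        have h2 : μ (U \ F) < ENNReal.ofReal (ε/3) := by
          rw [← ENNReal.ofReal_add (by linarith) (by linarith)] at h1
          convert h1 using 2; ring
        exact ENNReal.toReal_lt_of_lt_ofReal h2
      -- Urysohn function
      obtain ⟨f, hf0, hf1, hf01⟩ := exists_continuous_zero_one_of_isClosed
        hUopen.isClosed_compl hFclosed
        (by rw [Set.disjoint_compl_left_iff_subset]; exact hFA.trans hAU)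
      have hfb : ∀ x, |f x| ≤ 1 := by
        intro x; rw [abs_le]; constructor
        · linarith [(hf01 x).1]
        · exact (hf01 x).2
      -- pointwise distance between f and h is bounded by the indicator of U \ F
      have hfh : ∀ x, |f x - h x| ≤ (U \ F).indicator (fun _ => (1:ℝ)) x := by
        intro x
        have hind : (0:ℝ) ≤ (U \ F).indicator (fun _ => (1:ℝ)) x :=
          Set.indicator_apply_nonneg fun _ => zero_le_one
        by_cases hxF : x ∈ F
        · have h1 : f x = 1 := hf1 hxF
          have h2 : h x = 1 := by simp [hh, Set.indicator_apply, hFA hxF]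
          rw [h1, h2]; simpa using hind
        · by_cases hxU : x ∈ U
          · have hmem : x ∈ U \ F := ⟨hxU, hxF⟩
            rw [Set.indicator_of_mem hmem]
            have h1 := (hf01 x).1
            have h2 := (hf01 x).2
            have h3 := abs_le.mp (hhb x)
            have h4 : 0 ≤ h x := Set.indicator_apply_nonneg fun _ => zero_le_one
            rw [abs_le]; constructor <;> linarith [h3.2, h3.1]
          · have hxA : x ∉ A := fun hc => hxU (hAU hc)
            have h1 : f x = 0 := hf0 hxU
            have h2 : h x = 0 := by simp [hh, Set.indicator_apply, hxA]
            rw [h1, h2]; simpa using hind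
      -- integrability helper
      have hintd : ∀ u v : X → ℝ, Measurable u → Measurable v →
          (∀ x, |u x| ≤ 1) → (∀ x, |v x| ≤ 1) →
          Integrable (fun x => |u x - v x|) μ := by
        intro u v hu hv hub hvb
        apply hint _ ((hu.sub hv).abs).aestronglyMeasurable
        intro x
        rw [abs_abs]
        have h1 := abs_le.mp (hub x)
        have h2 := abs_le.mp (hvb x)
        rw [abs_le, Pi.sub_apply]; constructor <;> linarith [h1.1, h1.2, h2.1, h2.2]
      have hfmeas : Measurable f := f.continuous.measurable
      have hDfh : ∫ x, |f x - h x| ∂μ < ε/3 := by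
        have hle : ∫ x, |f x - h x| ∂μ ≤ ∫ x, (U \ F).indicator (fun _ => (1:ℝ)) x ∂μ := by
          apply integral_mono (hintd f h hfmeas hhm hfb hhb)
            ((integrable_const (1:ℝ)).indicator
              (hUopen.measurableSet.diff hFclosed.measurableSet)) hfh
        calc ∫ x, |f x - h x| ∂μ
            ≤ ∫ x, (U \ F).indicator (fun _ => (1:ℝ)) x ∂μ := hle
          _ = (μ (U \ F)).toReal := by
              rw [integral_indicator_const (1:ℝ)
                (hUopen.measurableSet.diff hFclosed.measurableSet)]; simp [Measure.real]
          _ < ε/3 := hμUF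
      -- the continuous modulus K
      set K : (Fin d → ℝ) → ℝ := fun w => ∫ x, |f (τ (w, x)) - f x| ∂μ with hK
      have hKcont : Continuous K := by
        apply continuous_of_dominated (bound := fun _ => (2:ℝ))
        · intro w
          exact (((f.continuous.comp (hTcont w)).measurable.sub hfmeas).abs).aestronglyMeasurable
        · intro w
          refine Filter.Eventually.of_forall fun x => ?_
          rw [Real.norm_eq_abs, abs_abs]
          have h1 := abs_le.mp (hfb (τ (w, x)))
          have h2 := abs_le.mp (hfb x)
          rw [abs_le]; constructor <;> linarith [h1.1, h1.2, h2.1, h2.2]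
        · exact integrable_const 2
        · refine Filter.Eventually.of_forall fun x => ?_
          have hc : Continuous fun w : Fin d → ℝ => τ (w, x) :=
            hτcont.comp (continuous_id.prodMk continuous_const)
          exact ((f.continuous.comp hc).sub continuous_const).abs
      have hK0 : K 0 = 0 := by
        simp only [hK, hτzero, sub_self, abs_zero, integral_zero]
      -- pick z ∈ Z with K (y - z) < ε/3
      have hV : IsOpen {w : Fin d → ℝ | K w < ε/3} := isOpen_lt hKcont continuous_const
      have hW : IsOpen ((fun z : Fin d → ℝ => y - z) ⁻¹' {w | K w < ε/3}) :=
        hV.preimage (continuous_const.sub continuous_id)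
      have hyW : y ∈ (fun z : Fin d → ℝ => y - z) ⁻¹' {w | K w < ε/3} := by
        simp only [Set.mem_preimage, sub_self, Set.mem_setOf_eq, hK0]
        positivity
      obtain ⟨z, hzZ, hzW⟩ := hZ.exists_mem_open hW ⟨y, hyW⟩
      have hKz : K (y - z) < ε/3 := hzW
      -- the four functions
      have hbnd : ∀ (w : Fin d → ℝ) (g : X → ℝ), (∀ x, |g x| ≤ 1) →
          ∀ x, |g (τ (w, x))| ≤ 1 := fun w g hg x => hg _
      have hma : ∀ w : Fin d → ℝ, Measurable fun x => h (τ (w, x)) :=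
        fun w => hhm.comp (hTmeas w)
      have hmf : ∀ w : Fin d → ℝ, Measurable fun x => f (τ (w, x)) :=
        fun w => hfmeas.comp (hTmeas w)
      -- pointwise chain
      have hptw : ∀ x, |h (τ (y, x)) - h x| ≤
          |h (τ (y, x)) - f (τ (y, x))| + |f (τ (y, x)) - f (τ (z, x))|
          + |f (τ (z, x)) - h (τ (z, x))| + |h (τ (z, x)) - h x| := by
        intro x
        calc |h (τ (y, x)) - h x|
            ≤ |h (τ (y, x)) - h (τ (z, x))| + |h (τ (z, x)) - h x| := abs_sub_le _ _ _
          _ ≤ (|h (τ (y, x)) - f (τ (z, x))| + |f (τ (z, x)) - h (τ (z, x))|)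
              + |h (τ (z, x)) - h x| := by
                have := abs_sub_le (h (τ (y, x))) (f (τ (z, x))) (h (τ (z, x)))
                linarith
          _ ≤ ((|h (τ (y, x)) - f (τ (y, x))| + |f (τ (y, x)) - f (τ (z, x))|)
              + |f (τ (z, x)) - h (τ (z, x))|) + |h (τ (z, x)) - h x| := by
                have := abs_sub_le (h (τ (y, x))) (f (τ (y, x))) (f (τ (z, x)))
                linarith
          _ = _ := by ring
      -- integrability of the four terms
      have hi1 : Integrable (fun x => |h (τ (y, x)) - f (τ (y, x))|) μ :=
        hintd _ _ (hma y) (hmf y) (fun x => hhb _) (fun x => hfb _)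
      have hi2 : Integrable (fun x => |f (τ (y, x)) - f (τ (z, x))|) μ :=
        hintd _ _ (hmf y) (hmf z) (fun x => hfb _) (fun x => hfb _)
      have hi3 : Integrable (fun x => |f (τ (z, x)) - h (τ (z, x))|) μ :=
        hintd _ _ (hmf z) (hma z) (fun x => hfb _) (fun x => hhb _)
      have hi4 : Integrable (fun x => |h (τ (z, x)) - h x|) μ :=
        hintd _ _ (hma z) hhm (fun x => hhb _) hhb
      have hi0 : Integrable (fun x => |h (τ (y, x)) - h x|) μ :=
        hintd _ _ (hma y) hhm (fun x => hhb _) hhb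
      -- term 1 and term 3 : change of variables
      have hgfh : AEStronglyMeasurable (fun x => |h x - f x|) μ :=
        ((hhm.sub hfmeas).abs).aestronglyMeasurable
      have ht1 : ∫ x, |h (τ (y, x)) - f (τ (y, x))| ∂μ = ∫ x, |h x - f x| ∂μ :=
        hmap y (fun x => |h x - f x|) hgfh
      have ht3 : ∫ x, |f (τ (z, x)) - h (τ (z, x))| ∂μ = ∫ x, |f x - h x| ∂μ :=
        hmap z (fun x => |f x - h x|) ((hfmeas.sub hhm).abs).aestronglyMeasurable
      have hhf_lt : ∫ x, |h x - f x| ∂μ < ε/3 := by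
        have : (fun x => |h x - f x|) = fun x => |f x - h x| := by
          funext x; rw [abs_sub_comm]
        rw [this]; exact hDfh
      -- term 2 : change of variables to K (y - z)
      have ht2 : ∫ x, |f (τ (y, x)) - f (τ (z, x))| ∂μ = K (y - z) := by
        have heq : ∀ x, f (τ (y, x)) = f (τ (y - z, τ (z, x))) := by
          intro x
          rw [← hτadd (y - z) z x, sub_add_cancel]
        have : (fun x => |f (τ (y, x)) - f (τ (z, x))|)
            = fun x => |f (τ (y - z, τ (z, x))) - f (τ (z, x))| := by
          funext x; rw [heq x]
        rw [this]
        exact hmap z (fun x => |f (τ (y - z, x)) - f x|)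
          ((((hmf (y - z)).sub hfmeas).abs).aestronglyMeasurable)
      -- term 4 : null on Z
      have ht4 : ∫ x, |h (τ (z, x)) - h x| ∂μ = 0 := by
        rw [key z, hnull2 z hzZ]; simp
      -- put everything together
      have hsum : (μ (symmDiff ((fun x => τ (y, x)) ⁻¹' A) A)).toReal
          ≤ ∫ x, |h (τ (y, x)) - f (τ (y, x))| ∂μ + ∫ x, |f (τ (y, x)) - f (τ (z, x))| ∂μ
            + ∫ x, |f (τ (z, x)) - h (τ (z, x))| ∂μ + ∫ x, |h (τ (z, x)) - h x| ∂μ := by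
        rw [← key y]
        calc ∫ x, |h (τ (y, x)) - h x| ∂μ
            ≤ ∫ x, (|h (τ (y, x)) - f (τ (y, x))| + |f (τ (y, x)) - f (τ (z, x))|
              + |f (τ (z, x)) - h (τ (z, x))| + |h (τ (z, x)) - h x|) ∂μ :=
              integral_mono hi0 (((hi1.add hi2).add hi3).add hi4) hptw
          _ = _ := by
              have hi12 : Integrable (fun x => |h (τ (y, x)) - f (τ (y, x))|
                  + |f (τ (y, x)) - f (τ (z, x))|) μ := hi1.add hi2
              have hi123 : Integrable (fun x => |h (τ (y, x)) - f (τ (y, x))|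
                  + |f (τ (y, x)) - f (τ (z, x))|
                  + |f (τ (z, x)) - h (τ (z, x))|) μ := hi12.add hi3
              rw [integral_add hi123 hi4, integral_add hi12 hi3, integral_add hi1 hi2]
      rw [ht1, ht2, ht3, ht4] at hsum
      have : (μ (symmDiff ((fun x => τ (y, x)) ⁻¹' A) A)).toReal < ε/3 + ε/3 + ε/3 + 0 := by
        calc (μ (symmDiff ((fun x => τ (y, x)) ⁻¹' A) A)).toReal
            ≤ ∫ x, |h x - f x| ∂μ + K (y - z) + ∫ x, |f x - h x| ∂μ + 0 := hsum
          _ < ε/3 + ε/3 + ε/3 + 0 := by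
              have := hhf_lt; have := hKz; have := hDfh
              gcongr
      linarith
    have hnn := ENNReal.toReal_nonneg (a := μ (symmDiff ((fun x => τ (y, x)) ⁻¹' A) A))
    have hle0 : (μ (symmDiff ((fun x => τ (y, x)) ⁻¹' A) A)).toReal ≤ 0 := by
      by_contra hc
      push_neg at hc
      have := main ((μ (symmDiff ((fun x => τ (y, x)) ⁻¹' A) A)).toReal / 2) (by linarith)
      linarith
    have h0 : (μ (symmDiff ((fun x => τ (y, x)) ⁻¹' A) A)).toReal = 0 := le_antisymm hle0 hnn
    rcases (ENNReal.toReal_eq_zero_iff _).mp h0 with h | h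
    · exact h
    · exact absurd h (measure_ne_top μ _)
  -- Step 2: construct a strictly invariant set B with μ(A Δ B) = 0
  set S : Set ((Fin d → ℝ) × X) :=
    (τ ⁻¹' A ∩ (Prod.snd ⁻¹' A)ᶜ) ∪ ((τ ⁻¹' A)ᶜ ∩ Prod.snd ⁻¹' A) with hS
  have hSm : MeasurableSet S :=
    ((hτmeas hA).inter (measurable_snd hA).compl).union
      ((hτmeas hA).compl.inter (measurable_snd hA))
  have hsec : ∀ y : Fin d → ℝ, Prod.mk y ⁻¹' S = symmDiff ((fun x => τ (y, x)) ⁻¹' A) A := by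
    intro y
    ext x
    simp only [hS, Set.mem_preimage, Set.mem_union, Set.mem_inter_iff, Set.mem_compl_iff,
      Set.mem_symmDiff, Set.mem_diff]
    tauto
  have hprod : ((volume : Measure (Fin d → ℝ)).prod μ) S = 0 := by
    rw [Measure.prod_apply hSm]
    have hz : ∀ y : Fin d → ℝ, μ (Prod.mk y ⁻¹' S) = 0 := fun y => by
      rw [hsec y]; exact step1 y
    simp [hz]
  have hsec2m : Measurable fun x : X =>
      (volume : Measure (Fin d → ℝ)) ((fun y => (y, x)) ⁻¹' S) :=
    measurable_measure_prodMk_right hSm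
  have hx0 : ∀ᵐ x ∂μ, (volume : Measure (Fin d → ℝ)) ((fun y => (y, x)) ⁻¹' S) = 0 := by
    have h1 := Measure.prod_apply_symm (μ := (volume : Measure (Fin d → ℝ))) (ν := μ) hSm
    rw [hprod] at h1
    have h2 := (lintegral_eq_zero_iff hsec2m).mp h1.symm
    filter_upwards [h2] with x hx using hx
  set Sc : Set ((Fin d → ℝ) × X) := (τ ⁻¹' A)ᶜ with hSc
  have hScm : MeasurableSet Sc := (hτmeas hA).compl
  set B : Set X := {x | (volume : Measure (Fin d → ℝ)) ((fun y => (y, x)) ⁻¹' Sc) = 0} with hB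
  have hBm : MeasurableSet B := by
    have hm := measurable_measure_prodMk_right (μ := (volume : Measure (Fin d → ℝ))) hScm
    exact hm (measurableSet_singleton 0)
  have hBinv : ∀ y : Fin d → ℝ, (fun x => τ (y, x)) ⁻¹' B = B := by
    intro y
    ext x
    simp only [hB, Set.mem_preimage, Set.mem_setOf_eq]
    have hset : ((fun y' => (y', τ (y, x))) ⁻¹' Sc)
        = (fun y' => y' + y) ⁻¹' ((fun y' => (y', x)) ⁻¹' Sc) := by
      ext y'
      simp only [hSc, Set.mem_preimage, Set.mem_compl_iff]
      rw [← hτadd y' y x]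
    rw [hset, measure_preimage_add_right]
  have hAB : A =ᵐ[μ] B := by
    rw [Filter.eventuallyEq_set]
    filter_upwards [hx0] with x hx
    constructor
    · intro hxA
      have hsub : (fun y => (y, x)) ⁻¹' Sc ⊆ (fun y => (y, x)) ⁻¹' S := by
        intro y' hy'
        simp only [hSc, Set.mem_preimage, Set.mem_compl_iff] at hy'
        simp only [hS, Set.mem_preimage, Set.mem_union, Set.mem_inter_iff, Set.mem_compl_iff]
        tauto
      exact measure_mono_null hsub hx
    · intro hxB
      by_contra hxA
      have h1 : (fun y => (y, x)) ⁻¹' (τ ⁻¹' A) ⊆ (fun y => (y, x)) ⁻¹' S := by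
        intro y' hy'
        simp only [Set.mem_preimage] at hy'
        simp only [hS, Set.mem_preimage, Set.mem_union, Set.mem_inter_iff, Set.mem_compl_iff]
        tauto
      have h2 : (volume : Measure (Fin d → ℝ)) ((fun y => (y, x)) ⁻¹' (τ ⁻¹' A)) = 0 :=
        measure_mono_null h1 hx
      have h3 : (volume : Measure (Fin d → ℝ)) ((fun y => (y, x)) ⁻¹' Sc) = 0 := hxB
      have huniv : (volume : Measure (Fin d → ℝ)) Set.univ = 0 := by
        have hsub : (Set.univ : Set (Fin d → ℝ))
            ⊆ ((fun y => (y, x)) ⁻¹' (τ ⁻¹' A)) ∪ ((fun y => (y, x)) ⁻¹' Sc) := by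
          intro y _
          by_cases hc : τ (y, x) ∈ A
          · exact Or.inl hc
          · exact Or.inr hc
        exact measure_mono_null hsub (measure_union_null h2 h3)
      exact (IsOpen.measure_pos volume isOpen_univ ⟨fun _ => 0, trivial⟩).ne' huniv
  have hmAB : μ A = μ B := measure_congr hAB
  rcases herg B hBm hBinv with hB0 | hB1
  · left; rw [hmAB, hB0]
  · right; rw [hmAB, hB1]
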